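/- Let f̄ = FNN_{L̄,D}(·; (W̄_i)_{i=1}^{L̄}, (b̄_i)_{i=1}^{L̄}) be a target network and (W_l)_{l=1}^{L} frozen weights with L ≥ L̄, and fix a LoRA-rank R ∈ {1, …, D} for which Assumption 1 holds. If R ≥ ⌈ max_{i∈{1,…,L̄}} rank(W̄_i − ∏_{l∈P^u_i} W_l) / M ⌉, then there exist matrices ΔW_1, …, ΔW_L ∈ ℝ^{D×D}, each of rank at most R, and bias vectors b̂_1, …, b̂_L ∈ ℝ^D, such that the adapted model f := FNN_{L,D}(·; (W_l + ΔW_l)_{l=1}^{L}, (b̂_l)_{l=1}^{L}) satisfies f(x) = f̄(x) for every x in the bounded input region X. -/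

import Mathlib

open Matrix Finset

noncomputable section

/-- Ordered matrix product `W_b * W_{b-1} * ⋯ * W_a` (larger indices on the
left); the identity matrix when `a > b`. -/
def mprod {D : ℕ} (W : ℕ → Matrix (Fin D) (Fin D) ℝ) (a b : ℕ) :
    Matrix (Fin D) (Fin D) ℝ :=
  (((List.range' a (b + 1 - a)).map W).reverse).prod

/-- Entrywise ReLU on vectors. -/
def reluVec {D : ℕ} (x : Fin D → ℝ) : Fin D → ℝ := fun i => max (x i) 0

/-- `fnn W b L x` is the output of the `L`-layer width-`D` ReLU fully connected
network with weight matrices `W` and biases `b` (layers indexed `1, …, L`):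
`z_0 = x`, `z_l = ReLU (W_l z_{l-1} + b_l)`. -/
def fnn {D : ℕ} (W : ℕ → Matrix (Fin D) (Fin D) ℝ) (b : ℕ → Fin D → ℝ) :
    ℕ → (Fin D → ℝ) → Fin D → ℝ
  | 0, x => x
  | l + 1, x => reluVec ((W (l + 1)).mulVec (fnn W b l x) + b (l + 1))

/-- A singular value decomposition of a square real matrix: `W = U Σ Vᵀ` with
`U, V` orthogonal and singular values in descending order, recorded 0-indexed
(`σ 0` is the paper's `σ_1`) and extended by zero from index `D` on. -/
structure SVD {D : ℕ} (W : Matrix (Fin D) (Fin D) ℝ) where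
  U : Matrix (Fin D) (Fin D) ℝ
  V : Matrix (Fin D) (Fin D) ℝ
  σ : ℕ → ℝ
  hU : Uᵀ * U = 1
  hV : Vᵀ * V = 1
  nonneg : ∀ i, 0 ≤ σ i
  anti : ∀ i j, i ≤ j → σ j ≤ σ i
  tail_zero : ∀ i, D ≤ i → σ i = 0
  decomp : W = U * Matrix.diagonal (fun i : Fin D => σ i) * Vᵀ

/-- `s.trunc r` is the best rank-`r` approximation `α_r(W)` obtained by
truncating the singular value decomposition `s` of `W` to its `r` largest
singular values. -/
def SVD.trunc {D : ℕ} {W : Matrix (Fin D) (Fin D) ℝ} (s : SVD W) (r : ℕ) :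
    Matrix (Fin D) (Fin D) ℝ :=
  s.U * Matrix.diagonal (fun i : Fin D => if (i : ℕ) < r then s.σ i else 0) * s.Vᵀ

/-- `∏_{l ∈ P^u_i} W_l` : product of the frozen weights over the `i`-th block
of the uniform partition of `{1, …, L}` into `L̄` blocks (`M := ⌊L/L̄⌋`;
block `i < L̄` is `{(i−1)M+1, …, iM}` and block `L̄` is `{(L̄−1)M+1, …, L}`),
with larger indices on the left. -/
def puProd {D : ℕ} (W : ℕ → Matrix (Fin D) (Fin D) ℝ) (L Lbar i : ℕ) :
    Matrix (Fin D) (Fin D) ℝ :=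
  mprod W ((i - 1) * (L / Lbar) + 1) (if i = Lbar then L else i * (L / Lbar))

/-! ### Basic helper lemmas -/

lemma reluVec_of_nonneg {D : ℕ} {v : Fin D → ℝ} (h : ∀ j, 0 ≤ v j) : reluVec v = v := by
  funext j; exact max_eq_left (h j)

lemma norm_reluVec_le {D : ℕ} (v : Fin D → ℝ) : ‖reluVec v‖ ≤ ‖v‖ := by
  rw [pi_norm_le_iff_of_nonneg (norm_nonneg v)]
  intro j
  rw [Real.norm_eq_abs, reluVec, abs_le]
  constructor
  · have h2 : -‖v‖ ≤ v j := by
      have := norm_le_pi_norm v j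
      rw [Real.norm_eq_abs] at this
      linarith [abs_le.mp this]
    have : (0:ℝ) ≤ ‖v‖ := norm_nonneg v
    exact le_max_of_le_right (by linarith)
  · have := norm_le_pi_norm v j
    rw [Real.norm_eq_abs] at this
    exact max_le (abs_le.mp this).2 (norm_nonneg v)

lemma fnn_congr_bias {D : ℕ} (W : ℕ → Matrix (Fin D) (Fin D) ℝ)
    (b b' : ℕ → Fin D → ℝ) (l : ℕ) (h : ∀ k, 1 ≤ k → k ≤ l → b k = b' k)
    (x : Fin D → ℝ) : fnn W b l x = fnn W b' l x := by
  induction l with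
  | zero => rfl
  | succ l ih =>
    show reluVec _ = reluVec _
    rw [ih (fun k h1 h2 => h k h1 (by omega)), h (l+1) (by omega) le_rfl]

lemma fnn_shift {D : ℕ} (W : ℕ → Matrix (Fin D) (Fin D) ℝ)
    (b : ℕ → Fin D → ℝ) (a n : ℕ) (x : Fin D → ℝ) :
    fnn W b (a + n) x
      = fnn (fun k => W (a + k)) (fun k => b (a + k)) n (fnn W b a x) := by
  induction n with
  | zero => rfl
  | succ n ih =>
    show reluVec (W (a + n + 1) *ᵥ fnn W b (a + n) x + b (a + n + 1)) = _
    rw [ih]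
    rfl

lemma fnn_of_pos {D : ℕ} (W : ℕ → Matrix (Fin D) (Fin D) ℝ)
    (b : ℕ → Fin D → ℝ) {l : ℕ} (hl : 1 ≤ l) (x : Fin D → ℝ) :
    fnn W b l x = reluVec ((W l).mulVec (fnn W b (l-1) x) + b l) := by
  obtain ⟨n, rfl⟩ : ∃ n, l = n + 1 := ⟨l - 1, by omega⟩
  simp [fnn]

lemma exists_mulVec_bound {D : ℕ} (S : Matrix (Fin D) (Fin D) ℝ) (C : ℝ) :
    ∃ t : ℝ, 0 ≤ t ∧ ∀ y : Fin D → ℝ, ‖y‖ ≤ C → ∀ j, |S.mulVec y j| ≤ t := by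
  set T := LinearMap.toContinuousLinearMap (Matrix.mulVecLin S) with hT
  refine ⟨‖T‖ * max C 0, by positivity, fun y hy j => ?_⟩
  have h1 : S.mulVec y = T y := by simp [hT]
  calc |S.mulVec y j| = ‖(S.mulVec y) j‖ := (Real.norm_eq_abs _).symm
    _ ≤ ‖S.mulVec y‖ := norm_le_pi_norm _ j
    _ = ‖T y‖ := by rw [h1]
    _ ≤ ‖T‖ * ‖y‖ := T.le_opNorm y
    _ ≤ ‖T‖ * max C 0 :=
        mul_le_mul_of_nonneg_left (le_trans hy (le_max_left _ _)) (norm_nonneg T)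

lemma fnn_bounded {D : ℕ} (W : ℕ → Matrix (Fin D) (Fin D) ℝ)
    (b : ℕ → Fin D → ℝ) (X : Set (Fin D → ℝ)) (hX : Bornology.IsBounded X) :
    ∀ i, ∃ C, ∀ x ∈ X, ‖fnn W b i x‖ ≤ C := by
  intro i
  induction i with
  | zero => exact isBounded_iff_forall_norm_le.mp hX
  | succ i ih =>
    obtain ⟨C, hC⟩ := ih
    obtain ⟨t, ht0, ht⟩ := exists_mulVec_bound (W (i+1)) C
    refine ⟨t + ‖b (i+1)‖, fun x hx => ?_⟩
    show ‖reluVec _‖ ≤ _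
    refine le_trans (norm_reluVec_le _) (le_trans (norm_add_le _ _) ?_)
    have h2 : ‖(W (i+1)).mulVec (fnn W b i x)‖ ≤ t := by
      rw [pi_norm_le_iff_of_nonneg ht0]
      intro j
      rw [Real.norm_eq_abs]
      exact ht _ (hC x hx) j
    linarith

/-! ### mprod lemmas -/

lemma mprod_of_lt {D : ℕ} (W : ℕ → Matrix (Fin D) (Fin D) ℝ) {a b : ℕ} (h : b < a) :
    mprod W a b = 1 := by
  have : b + 1 - a = 0 := by omega
  simp [mprod, this]

lemma mprod_peel {D : ℕ} (W : ℕ → Matrix (Fin D) (Fin D) ℝ) {a b : ℕ} (h : a ≤ b) :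
    mprod W a b = mprod W (a+1) b * W a := by
  have h1 : b + 1 - a = (b - a) + 1 := by omega
  have h2 : b + 1 - (a + 1) = b - a := by omega
  rw [mprod, mprod, h1, h2, List.range'_succ, List.map_cons, List.reverse_cons,
    List.prod_append, List.prod_singleton]

lemma mprod_det_ne_zero {D : ℕ} (W : ℕ → Matrix (Fin D) (Fin D) ℝ) :
    ∀ n a b, b + 1 - a ≤ n → (∀ l, a ≤ l → l ≤ b → (W l).det ≠ 0) →
      (mprod W a b).det ≠ 0 := by
  intro n
  induction n with
  | zero =>
    intro a b h _
    rw [mprod_of_lt W (by omega)]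
    simp
  | succ n ih =>
    intro a b h hdet
    by_cases hab : b < a
    · rw [mprod_of_lt W hab]; simp
    · push_neg at hab
      rw [mprod_peel W hab, Matrix.det_mul]
      exact mul_ne_zero (ih (a+1) b (by omega) (fun l h1 h2 => hdet l (by omega) h2))
        (hdet a le_rfl hab)

/-! ### rank lemmas -/

lemma rank_unit_mul {D : ℕ} (A B : Matrix (Fin D) (Fin D) ℝ) (hA : IsUnit A.det) :
    (A * B).rank = B.rank := by
  refine le_antisymm (Matrix.rank_mul_le_right A B) ?_
  have h : B = A⁻¹ * (A * B) := by
    rw [← mul_assoc, Matrix.nonsing_inv_mul A hA, one_mul]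
  conv_lhs => rw [h]
  exact Matrix.rank_mul_le_right _ _

lemma rank_mul_unit' {D : ℕ} (A B : Matrix (Fin D) (Fin D) ℝ) (hB : IsUnit B.det) :
    (A * B).rank = A.rank := by
  refine le_antisymm (Matrix.rank_mul_le_left A B) ?_
  have h : A = (A * B) * B⁻¹ := by
    rw [mul_assoc, Matrix.mul_nonsing_inv B hB, mul_one]
  conv_lhs => rw [h]
  exact Matrix.rank_mul_le_left _ _

/-! ### SVD lemmas -/

namespace SVD

variable {D : ℕ} {Wm : Matrix (Fin D) (Fin D) ℝ} (s : SVD Wm)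

lemma hUdet : IsUnit s.U.det := by
  have h := congrArg Matrix.det s.hU
  rw [Matrix.det_mul, Matrix.det_transpose, Matrix.det_one] at h
  exact IsUnit.of_mul_eq_one _ h

lemma hVdet : IsUnit s.V.det := by
  have h := congrArg Matrix.det s.hV
  rw [Matrix.det_mul, Matrix.det_transpose, Matrix.det_one] at h
  exact IsUnit.of_mul_eq_one _ h

lemma hVtdet : IsUnit s.Vᵀ.det := by
  rw [Matrix.det_transpose]; exact s.hVdet

lemma trunc_zero : s.trunc 0 = 0 := by
  have : (fun i : Fin D => if (i:ℕ) < 0 then s.σ i else 0) = fun _ => (0:ℝ) := by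
    funext i; simp
  rw [SVD.trunc, this, Matrix.diagonal_zero, mul_zero, zero_mul]

lemma rank_trunc_sub_le (r1 r2 : ℕ) (h : r1 ≤ r2) :
    (s.trunc r2 - s.trunc r1).rank ≤ r2 - r1 := by
  classical
  set d : Fin D → ℝ := fun i => if r1 ≤ (i:ℕ) ∧ (i:ℕ) < r2 then s.σ i else 0 with hd
  have hfun : (fun i : Fin D => (if (i:ℕ) < r2 then s.σ i else 0)
      - if (i:ℕ) < r1 then s.σ i else 0) = d := by
    funext i
    simp only [hd]
    split_ifs <;> (try ring_nf) <;> omega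
  have key : s.trunc r2 - s.trunc r1 = s.U * Matrix.diagonal d * s.Vᵀ := by
    rw [SVD.trunc, SVD.trunc, ← sub_mul, ← Matrix.mul_sub, Matrix.diagonal_sub, hfun]
  rw [key]
  have h1 : (s.U * Matrix.diagonal d * s.Vᵀ).rank ≤ (Matrix.diagonal d).rank :=
    le_trans (Matrix.rank_mul_le_left _ _) (Matrix.rank_mul_le_right _ _)
  refine le_trans h1 ?_
  rw [Matrix.rank_diagonal, Fintype.card_subtype]
  calc (Finset.univ.filter fun i : Fin D => d i ≠ 0).card
      ≤ (Finset.Ico r1 r2).card := by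
        apply Finset.card_le_card_of_injOn (fun i : Fin D => (i:ℕ))
        · intro i hi
          simp only [Finset.mem_coe, Finset.mem_filter, hd] at hi
          rcases hi with ⟨-, hne⟩
          by_contra hmem
          apply hne
          rw [if_neg]
          intro hc
          exact hmem (Finset.mem_Ico.mpr hc)
        · intro i _ j _ hij
          exact Fin.ext hij
    _ = r2 - r1 := Nat.card_Ico r1 r2

lemma rank_eq_card_support : Wm.rank = Fintype.card {i : Fin D // s.σ (i:ℕ) ≠ 0} := by
  conv_lhs => rw [s.decomp]
  rw [rank_mul_unit' _ _ s.hVtdet, rank_unit_mul _ _ s.hUdet, Matrix.rank_diagonal]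

lemma sigma_eq_zero_of_rank_le (i : ℕ) (h : Wm.rank ≤ i) : s.σ i = 0 := by
  by_cases hD : D ≤ i
  · exact s.tail_zero i hD
  push_neg at hD
  by_contra hne
  have hpos : 0 < s.σ i := lt_of_le_of_ne (s.nonneg i) (Ne.symm hne)
  set i' : Fin D := ⟨i, hD⟩ with hi'
  have hsub : Finset.Iic i' ⊆ Finset.univ.filter (fun j : Fin D => s.σ (j:ℕ) ≠ 0) := by
    intro j hj
    rw [Finset.mem_Iic] at hj
    rw [Finset.mem_filter]
    refine ⟨Finset.mem_univ _, ?_⟩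
    have h2 : s.σ i ≤ s.σ (j:ℕ) := s.anti (j:ℕ) i hj
    exact ne_of_gt (lt_of_lt_of_le hpos h2)
  have hcard := Finset.card_le_card hsub
  rw [Fin.card_Iic] at hcard
  rw [s.rank_eq_card_support, Fintype.card_subtype] at h
  simp only [hi'] at hcard
  omega

lemma trunc_of_rank_le (r : ℕ) (h : Wm.rank ≤ r) : s.trunc r = Wm := by
  have hfun : (fun i : Fin D => if (i:ℕ) < r then s.σ i else 0)
      = (fun i : Fin D => s.σ i) := by
    funext i
    by_cases hir : (i:ℕ) < r
    · rw [if_pos hir]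
    · rw [if_neg hir]
      exact (s.sigma_eq_zero_of_rank_le _ (le_trans h (by omega))).symm
  rw [SVD.trunc, hfun, ← s.decomp]

end SVD

/-! ### the single-block emulation lemma -/

lemma block_emulate {D : ℕ} (A S : ℕ → Matrix (Fin D) (Fin D) ℝ) (m : ℕ) (hm : 1 ≤ m)
    (hS0 : S 0 = 1) (hstep : ∀ k, 1 ≤ k → k ≤ m → A k * S (k-1) = S k)
    (Y : Set (Fin D → ℝ)) (C : ℝ) (hY : ∀ y ∈ Y, ‖y‖ ≤ C) (β : Fin D → ℝ) :
    ∃ bh : ℕ → Fin D → ℝ, ∀ y ∈ Y, fnn A bh m y = reluVec ((S m).mulVec y + β) := by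
  have aux : ∀ k, k ≤ m - 1 → ∃ (bh : ℕ → Fin D → ℝ) (t : ℝ),
      ∀ y ∈ Y, fnn A bh k y = (S k).mulVec y + fun _ => t := by
    intro k
    induction k with
    | zero =>
      intro _
      refine ⟨fun _ _ => 0, 0, fun y _ => ?_⟩
      have h0 : fnn A (fun _ _ => (0:ℝ)) 0 y = y := rfl
      rw [h0, hS0, Matrix.one_mulVec]
      funext j
      simp
    | succ k ih =>
      intro hk
      obtain ⟨bh, t, hbh⟩ := ih (by omega)
      obtain ⟨t1, ht10, ht1⟩ := exists_mulVec_bound (S (k+1)) C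
      set c : Fin D → ℝ := ((fun _ => t1) - (A (k+1)).mulVec (fun _ => t)) with hc
      refine ⟨Function.update bh (k+1) c, t1, fun y hy => ?_⟩
      have h0 : fnn A (Function.update bh (k+1) c) k y = fnn A bh k y :=
        fnn_congr_bias _ _ _ _ (fun j _ h2 => Function.update_of_ne (by omega) _ _) y
      show reluVec ((A (k+1)).mulVec (fnn A (Function.update bh (k+1) c) k y)
        + Function.update bh (k+1) c (k+1)) = _
      rw [h0, hbh y hy, Function.update_self]
      have hst := hstep (k+1) (by omega) (by omega)
      rw [Nat.add_sub_cancel] at hst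
      have hpre : (A (k+1)).mulVec ((S k).mulVec y + fun _ => t) + c
          = (S (k+1)).mulVec y + fun _ => t1 := by
        rw [Matrix.mulVec_add, Matrix.mulVec_mulVec, hst, hc]
        abel
      rw [hpre, reluVec_of_nonneg]
      intro j
      have habs := abs_le.mp (ht1 y (hY y hy) j)
      simp only [Pi.add_apply]
      linarith [habs.1]
  obtain ⟨bh, t, hbh⟩ := aux (m-1) le_rfl
  set c : Fin D → ℝ := (β - (A m).mulVec (fun _ => t)) with hc
  refine ⟨Function.update bh m c, fun y hy => ?_⟩
  have h0 : fnn A (Function.update bh m c) (m-1) y = fnn A bh (m-1) y :=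
    fnn_congr_bias _ _ _ _ (fun j _ h2 => Function.update_of_ne (by omega) _ _) y
  rw [fnn_of_pos _ _ hm, h0, hbh y hy, Function.update_self]
  have hst := hstep m (by omega) le_rfl
  have hpre : (A m).mulVec ((S (m-1)).mulVec y + fun _ => t) + c
      = (S m).mulVec y + β := by
    rw [Matrix.mulVec_add, Matrix.mulVec_mulVec, hst, hc]
    abel
  rw [hpre]

/-! ### the block/layer bookkeeping -/

def blkEnd (L Lbar M i : ℕ) : ℕ := if i = Lbar then L else i * M

def blkLen (L Lbar M i : ℕ) : ℕ := blkEnd L Lbar M i - (i - 1) * M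

def sched (R M ρ m k : ℕ) : ℕ :=
  if k = m then ρ else min (k * R) (min ρ (R * (M - 1)))

lemma sched_zero (R M ρ m : ℕ) (hm : 1 ≤ m) : sched R M ρ m 0 = 0 := by
  rw [sched, if_neg (by omega)]
  simp

lemma sched_last (R M ρ m : ℕ) : sched R M ρ m m = ρ := if_pos rfl

lemma sched_le (R M ρ m k : ℕ) (h : k ≠ m) : sched R M ρ m k ≤ R * (M - 1) := by
  rw [sched, if_neg h]
  exact le_trans (min_le_right _ _) (min_le_right _ _)

lemma sched_facts (R M ρ m k : ℕ) (h1 : 1 ≤ k) (h2 : k ≤ m) (hMm : M ≤ m)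
    (hρ : ρ ≤ R * M) (hM1 : 1 ≤ M) :
    sched R M ρ m (k-1) ≤ sched R M ρ m k ∧
      sched R M ρ m k - sched R M ρ m (k-1) ≤ R := by
  have e1 : R * (M-1) + R = R * M := by
    have hM' : M - 1 + 1 = M := by omega
    calc R*(M-1) + R = R*((M-1)+1) := (Nat.mul_succ R (M-1)).symm
      _ = R*M := by rw [hM']
  have hkm : k - 1 ≠ m := by omega
  simp only [sched, if_neg hkm]
  by_cases hk : k = m
  · simp only [if_pos hk]
    have e2 : R*(M-1) ≤ (k-1)*R := by
      calc R*(M-1) ≤ R*(k-1) := Nat.mul_le_mul_left R (by omega)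
        _ = (k-1)*R := mul_comm _ _
    omega
  · simp only [if_neg hk]
    have e3 : (k-1)*R + R = k*R := by
      have hk' : k - 1 + 1 = k := by omega
      calc (k-1)*R + R = ((k-1)+1)*R := (Nat.succ_mul (k-1) R).symm
        _ = k*R := by rw [hk']
    omega

def blkOf (Lbar M l : ℕ) : ℕ := min Lbar ((l - 1) / M + 1)

def locOf (Lbar M l : ℕ) : ℕ := l - (blkOf Lbar M l - 1) * M

/-! ### the construction -/

def Gmat {D : ℕ} (L Lbar M R : ℕ) (Wbar W : ℕ → Matrix (Fin D) (Fin D) ℝ)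
    (sE : ∀ i, SVD (Wbar i - puProd W L Lbar i)) (i k : ℕ) :
    Matrix (Fin D) (Fin D) ℝ :=
  puProd W L Lbar i +
    (sE i).trunc (sched R M ((Wbar i - puProd W L Lbar i).rank) (blkLen L Lbar M i) k)

def Smat {D : ℕ} (L Lbar M R : ℕ) (Wbar W : ℕ → Matrix (Fin D) (Fin D) ℝ)
    (sE : ∀ i, SVD (Wbar i - puProd W L Lbar i)) (i k : ℕ) :
    Matrix (Fin D) (Fin D) ℝ :=
  (mprod W ((i-1)*M + k + 1) (blkEnd L Lbar M i))⁻¹ * Gmat L Lbar M R Wbar W sE i k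

def Amat {D : ℕ} (L Lbar M R : ℕ) (Wbar W : ℕ → Matrix (Fin D) (Fin D) ℝ)
    (sE : ∀ i, SVD (Wbar i - puProd W L Lbar i)) (l : ℕ) :
    Matrix (Fin D) (Fin D) ℝ :=
  Smat L Lbar M R Wbar W sE (blkOf Lbar M l) (locOf Lbar M l) *
    (Smat L Lbar M R Wbar W sE (blkOf Lbar M l) (locOf Lbar M l - 1))⁻¹

/-- **Exact multi-layer FNN representation via LoRA (Theorem 1).**
Under the non-singularity Assumption 1 (uniform partition), if
`R ≥ ⌈max_i rank(W̄_i − ∏_{l∈P^u_i} W_l) / M⌉` then there are rank-`≤ R`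
adapters and biases making the adapted `L`-layer model agree with the
`L̄`-layer target on the bounded input region `X`. -/
theorem lora_fnn_exact_uniform_partition (D L Lbar M : ℕ)
    (hD : 1 ≤ D) (hLbar : 1 ≤ Lbar) (hLL : Lbar ≤ L) (hM : M = L / Lbar)
    (Wbar : ℕ → Matrix (Fin D) (Fin D) ℝ) (bbar : ℕ → Fin D → ℝ)
    (W : ℕ → Matrix (Fin D) (Fin D) ℝ)
    (R : ℕ) (hR1 : 1 ≤ R) (hRD : R ≤ D)
    (sE : ∀ i, SVD (Wbar i - puProd W L Lbar i))
    (hWns : ∀ l ∈ Finset.Icc 1 L, (W l).det ≠ 0)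
    (hns : ∀ i ∈ Finset.Icc 1 Lbar, ∀ r ≤ R * (M - 1),
      (puProd W L Lbar i + (sE i).trunc r).det ≠ 0)
    (hR : (((Finset.Icc 1 Lbar).sup fun i => (Wbar i - puProd W L Lbar i).rank)
        + M - 1) / M ≤ R)
    (X : Set (Fin D → ℝ)) (hX : Bornology.IsBounded X) :
    ∃ (ΔW : ℕ → Matrix (Fin D) (Fin D) ℝ) (bhat : ℕ → Fin D → ℝ),
      (∀ l ∈ Finset.Icc 1 L, (ΔW l).rank ≤ R) ∧
      ∀ x ∈ X, fnn (fun l => W l + ΔW l) bhat L x = fnn Wbar bbar Lbar x := by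
  classical
  have hM1 : 1 ≤ M := by
    rw [hM]
    exact (Nat.one_le_div_iff (by omega)).mpr hLL
  have hLbarM : Lbar * M ≤ L := by
    rw [hM, mul_comm]
    exact Nat.div_mul_le_self L Lbar
  -- abbreviations
  set SS := Smat L Lbar M R Wbar W sE with hSS
  set GG := Gmat L Lbar M R Wbar W sE with hGG
  set AA := Amat L Lbar M R Wbar W sE with hAA
  -- puProd in terms of M
  have hpu : ∀ i, puProd W L Lbar i = mprod W ((i-1)*M + 1) (blkEnd L Lbar M i) := by
    intro i
    simp only [puProd, blkEnd]
    rw [hM]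
  -- block facts
  have hblk : ∀ i, 1 ≤ i → i ≤ Lbar →
      (i-1)*M + blkLen L Lbar M i = blkEnd L Lbar M i ∧ M ≤ blkLen L Lbar M i ∧
        blkEnd L Lbar M i ≤ L := by
    intro i h1 h2
    simp only [blkLen, blkEnd]
    by_cases hi : i = Lbar
    · rw [if_pos hi]
      subst hi
      have key : (i-1)*M + M = i*M := by
        have e : i - 1 + 1 = i := by omega
        calc (i-1)*M + M = ((i-1)+1)*M := (Nat.succ_mul (i-1) M).symm
          _ = i*M := by rw [e]
      have h3 : i*M ≤ L := hLbarM
      omega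
    · rw [if_neg hi]
      have key : (i-1)*M + M = i*M := by
        have e : i - 1 + 1 = i := by omega
        calc (i-1)*M + M = ((i-1)+1)*M := (Nat.succ_mul (i-1) M).symm
          _ = i*M := by rw [e]
      have h3 : i*M ≤ Lbar*M := Nat.mul_le_mul_right M h2
      omega
  have hblkLen1 : ∀ i, 1 ≤ i → i ≤ Lbar → 1 ≤ blkLen L Lbar M i := by
    intro i h1 h2
    have := (hblk i h1 h2).2.1
    omega
  have hblkLenEq : ∀ i, 1 ≤ i → i < Lbar → blkLen L Lbar M i = M := by
    intro i h1 h2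
    have key : (i-1)*M + M = i*M := by
      have e : i - 1 + 1 = i := by omega
      calc (i-1)*M + M = ((i-1)+1)*M := (Nat.succ_mul (i-1) M).symm
        _ = i*M := by rw [e]
    simp only [blkLen, blkEnd, if_neg (by omega : ¬ i = Lbar)]
    omega
  -- direct location facts
  have hloc : ∀ i k, 1 ≤ i → i ≤ Lbar → 1 ≤ k → k ≤ blkLen L Lbar M i →
      blkOf Lbar M ((i-1)*M + k) = i ∧ locOf Lbar M ((i-1)*M + k) = k := by
    intro i k h1 h2 h3 h4
    have hdiv : ((i-1)*M + k - 1) / M = (k-1)/M + (i-1) := by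
      have e : (i-1)*M + k - 1 = (k-1) + M*(i-1) := by
        have := mul_comm (i-1) M
        omega
      rw [e, Nat.add_mul_div_left _ _ (show 0 < M by omega)]
    obtain ⟨q2, hq2⟩ : ∃ q2, (k-1)/M = q2 := ⟨_, rfl⟩
    by_cases hi : i = Lbar
    · have hbO : blkOf Lbar M ((i-1)*M + k) = i := by
        simp only [blkOf, hdiv, hq2]
        omega
      exact ⟨hbO, by rw [locOf, hbO]; omega⟩
    · have hkM : k ≤ M := by rw [← hblkLenEq i h1 (by omega)]; exact h4
      have hq0 : q2 = 0 := by rw [← hq2]; exact Nat.div_eq_of_lt (by omega)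
      have hbO : blkOf Lbar M ((i-1)*M + k) = i := by
        simp only [blkOf, hdiv, hq2, hq0]
        omega
      exact ⟨hbO, by rw [locOf, hbO]; omega⟩
  -- index decomposition
  have hdec : ∀ l, 1 ≤ l → l ≤ L → ∃ i k, 1 ≤ i ∧ i ≤ Lbar ∧ 1 ≤ k ∧
      k ≤ blkLen L Lbar M i ∧ l = (i-1)*M + k ∧ blkOf Lbar M l = i ∧
      locOf Lbar M l = k := by
    intro l hl1 hl2
    obtain ⟨q, hq⟩ : ∃ q, (l-1)/M = q := ⟨_, rfl⟩
    obtain ⟨r, hr, hqr⟩ : ∃ r, r < M ∧ M * q + r = l - 1 := by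
      refine ⟨(l-1) % M, Nat.mod_lt _ (by omega), ?_⟩
      rw [← hq]
      exact Nat.div_add_mod _ _
    by_cases hcase : Lbar ≤ q + 1
    · have hbO : blkOf Lbar M l = Lbar := by
        simp only [blkOf, hq]
        omega
      have hlO : locOf Lbar M l = l - (Lbar-1)*M := by rw [locOf, hbO]
      have hbl : blkLen L Lbar M Lbar = L - (Lbar-1)*M := by
        simp [blkLen, blkEnd]
      have h5 : (Lbar-1)*M ≤ M*q :=
        le_trans (le_of_eq (mul_comm _ _)) (Nat.mul_le_mul_left M (by omega))
      exact ⟨Lbar, l - (Lbar-1)*M, by omega, le_rfl, by omega,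
        by rw [hbl]; omega, by omega, hbO, hlO⟩
    · push_neg at hcase
      have hbO : blkOf Lbar M l = q + 1 := by
        simp only [blkOf, hq]
        omega
      have hlO : locOf Lbar M l = l - q*M := by
        rw [locOf, hbO, Nat.add_sub_cancel]
      have hbl : blkLen L Lbar M (q+1) = M := hblkLenEq (q+1) (by omega) (by omega)
      have h5 : q*M = M*q := mul_comm _ _
      refine ⟨q+1, l - q*M, by omega, by omega, by omega,
        by rw [hbl]; omega, ?_, hbO, hlO⟩
      rw [Nat.add_sub_cancel]
      omega
  -- rank bound from hR
  have hρRM : ∀ i, 1 ≤ i → i ≤ Lbar → (Wbar i - puProd W L Lbar i).rank ≤ R * M := by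
    intro i h1 h2
    have hsup : (Wbar i - puProd W L Lbar i).rank ≤ (Finset.Icc 1 Lbar).sup
        (fun i => (Wbar i - puProd W L Lbar i).rank) :=
      Finset.le_sup (f := fun i => (Wbar i - puProd W L Lbar i).rank)
        (Finset.mem_Icc.mpr ⟨h1, h2⟩)
    set SUP := (Finset.Icc 1 Lbar).sup fun i => (Wbar i - puProd W L Lbar i).rank
    have hdiv : SUP + M - 1 < (R+1) * M :=
      (Nat.div_lt_iff_lt_mul (by omega)).mp (by omega)
    have e : (R+1)*M = R*M + M := Nat.succ_mul R M
    omega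
  -- determinant facts
  have hmpdet : ∀ a b, 1 ≤ a → b ≤ L → IsUnit ((mprod W a b).det) := by
    intro a b ha hb
    rw [isUnit_iff_ne_zero]
    exact mprod_det_ne_zero W (b+1) a b (by omega)
      (fun l h1 h2 => hWns l (Finset.mem_Icc.mpr ⟨le_trans ha h1, le_trans h2 hb⟩))
  have hGdet : ∀ i k, 1 ≤ i → i ≤ Lbar → k ≠ blkLen L Lbar M i →
      IsUnit ((GG i k).det) := by
    intro i k h1 h2 h3
    rw [isUnit_iff_ne_zero, hGG, Gmat]
    exact hns i (Finset.mem_Icc.mpr ⟨h1, h2⟩) _ (sched_le _ _ _ _ _ h3)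
  have hSdet : ∀ i k, 1 ≤ i → i ≤ Lbar → k < blkLen L Lbar M i →
      IsUnit ((SS i k).det) := by
    intro i k h1 h2 h3
    rw [hSS, Smat, Matrix.det_mul]
    exact IsUnit.mul (Matrix.isUnit_nonsing_inv_det _
        (hmpdet _ _ (by omega) (hblk i h1 h2).2.2))
      (hGdet i k h1 h2 (by omega))
  -- S at 0 and at the end of each block
  have hS0 : ∀ i, 1 ≤ i → i ≤ Lbar → SS i 0 = 1 := by
    intro i h1 h2
    rw [hSS, Smat, hGG] at *
    rw [Gmat, sched_zero _ _ _ _ (hblkLen1 i h1 h2), (sE i).trunc_zero, add_zero,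
      hpu i, add_zero]
    exact Matrix.nonsing_inv_mul _ (hmpdet _ _ (by omega) (hblk i h1 h2).2.2)
  have hSm : ∀ i, 1 ≤ i → i ≤ Lbar → SS i (blkLen L Lbar M i) = Wbar i := by
    intro i h1 h2
    rw [hSS, Smat, Gmat, sched_last, (sE i).trunc_of_rank_le _ le_rfl,
      mprod_of_lt W (by have := (hblk i h1 h2).1; omega), inv_one, one_mul,
      add_sub_cancel]
  -- the step identity
  have hstepS : ∀ i k, 1 ≤ i → i ≤ Lbar → 1 ≤ k → k ≤ blkLen L Lbar M i →
      AA ((i-1)*M + k) * SS i (k-1) = SS i k := by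
    intro i k h1 h2 h3 h4
    obtain ⟨hbO, hlO⟩ := hloc i k h1 h2 h3 h4
    have hA : AA ((i-1)*M + k) = SS i k * (SS i (k-1))⁻¹ := by
      rw [hAA, Amat, hbO, hlO, ← hSS]
    rw [hA, mul_assoc, Matrix.nonsing_inv_mul _ (hSdet i (k-1) h1 h2 (by omega)),
      mul_one]
  -- rank bound for the adapters
  have hrank : ∀ l ∈ Finset.Icc 1 L, (AA l - W l).rank ≤ R := by
    intro l hl
    rw [Finset.mem_Icc] at hl
    obtain ⟨i, k, h1, h2, h3, h4, heq, hbO, hlO⟩ := hdec l hl.1 hl.2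
    obtain ⟨hbE1, hbE2, hbE3⟩ := hblk i h1 h2
    have hWl : IsUnit (W ((i-1)*M + k)).det := by
      rw [← heq]
      exact isUnit_iff_ne_zero.mpr (hWns l (Finset.mem_Icc.mpr hl))
    have hle : (i-1)*M + k ≤ blkEnd L Lbar M i := by omega
    have hpeel : mprod W ((i-1)*M + k) (blkEnd L Lbar M i)
        = mprod W ((i-1)*M + k + 1) (blkEnd L Lbar M i) * W ((i-1)*M + k) :=
      mprod_peel W hle
    have hSk1 : SS i (k-1)
        = (mprod W ((i-1)*M + k) (blkEnd L Lbar M i))⁻¹ * GG i (k-1) := by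
      have e : (i-1)*M + (k-1) + 1 = (i-1)*M + k := by omega
      rw [hSS, Smat, ← hGG, e]
    have hWS : W ((i-1)*M + k) * SS i (k-1)
        = (mprod W ((i-1)*M + k + 1) (blkEnd L Lbar M i))⁻¹ * GG i (k-1) := by
      rw [hSk1, hpeel, Matrix.mul_inv_rev, ← mul_assoc, ← mul_assoc,
        Matrix.mul_nonsing_inv _ hWl, one_mul]
    have hfacts := sched_facts R M ((Wbar i - puProd W L Lbar i).rank)
      (blkLen L Lbar M i) k h3 h4 hbE2 (hρRM i h1 h2) hM1
    have hGsub : GG i k - GG i (k-1)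
        = (sE i).trunc (sched R M ((Wbar i - puProd W L Lbar i).rank)
            (blkLen L Lbar M i) k)
          - (sE i).trunc (sched R M ((Wbar i - puProd W L Lbar i).rank)
            (blkLen L Lbar M i) (k-1)) := by
      rw [hGG, Gmat, Gmat, add_sub_add_left_eq_sub]
    have h1' : (mprod W ((i-1)*M + k + 1) (blkEnd L Lbar M i))⁻¹
        * (GG i k - GG i (k-1)) = SS i k - W ((i-1)*M + k) * SS i (k-1) := by
      rw [Matrix.mul_sub, hWS]
      congr 1
    have hA : AA l = SS i k * (SS i (k-1))⁻¹ := by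
      rw [hAA, Amat, hbO, hlO, ← hSS]
    have hAW : AA l - W l
        = (mprod W ((i-1)*M + k + 1) (blkEnd L Lbar M i))⁻¹
            * (GG i k - GG i (k-1)) * (SS i (k-1))⁻¹ := by
      rw [hA, h1', sub_mul, mul_assoc,
        Matrix.mul_nonsing_inv _ (hSdet i (k-1) h1 h2 (by omega)), mul_one, heq]
    rw [hAW, hGsub]
    refine le_trans (le_trans (Matrix.rank_mul_le_left _ _)
      (Matrix.rank_mul_le_right _ _)) ?_
    exact le_trans ((sE i).rank_trunc_sub_le _ _ hfacts.1) hfacts.2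
  -- main induction over blocks
  have hmain : ∀ i, i ≤ Lbar → ∃ bh, ∀ x ∈ X,
      fnn AA bh (blkEnd L Lbar M i) x = fnn Wbar bbar i x := by
    intro i
    induction i with
    | zero =>
      intro _
      have h0 : blkEnd L Lbar M 0 = 0 := by
        rw [blkEnd, if_neg (by omega), zero_mul]
      exact ⟨fun _ _ => 0, fun x _ => by rw [h0]; rfl⟩
    | succ i ih =>
      intro hi1
      obtain ⟨bh, hbh⟩ := ih (by omega)
      obtain ⟨C, hC⟩ := fnn_bounded Wbar bbar X hX i
      have hblk1 := hblk (i+1) (by omega) hi1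
      have hbEi : blkEnd L Lbar M i = i * M := by
        rw [blkEnd, if_neg (by omega)]
      have hsum : blkEnd L Lbar M (i+1)
          = blkEnd L Lbar M i + blkLen L Lbar M (i+1) := by
        have h := hblk1.1
        rw [Nat.add_sub_cancel] at h
        omega
      have hm1 : 1 ≤ blkLen L Lbar M (i+1) := hblkLen1 (i+1) (by omega) hi1
      have hS0' : SS (i+1) 0 = 1 := hS0 (i+1) (by omega) hi1
      have hstep' : ∀ k, 1 ≤ k → k ≤ blkLen L Lbar M (i+1) →
          (fun k => AA (blkEnd L Lbar M i + k)) k * SS (i+1) (k-1) = SS (i+1) k := by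
        intro k hk1 hk2
        have h := hstepS (i+1) k (by omega) hi1 hk1 hk2
        rw [Nat.add_sub_cancel] at h
        show AA (blkEnd L Lbar M i + k) * SS (i+1) (k-1) = SS (i+1) k
        rw [hbEi]
        exact h
      obtain ⟨bl, hbl⟩ := block_emulate (fun k => AA (blkEnd L Lbar M i + k))
        (fun k => SS (i+1) k) (blkLen L Lbar M (i+1)) hm1 hS0' hstep'
        (fnn Wbar bbar i '' X) C
        (by rintro y ⟨x, hx, rfl⟩; exact hC x hx) (bbar (i+1))
      refine ⟨fun k => if k ≤ blkEnd L Lbar M i then bh k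
        else bl (k - blkEnd L Lbar M i), fun x hx => ?_⟩
      rw [hsum, fnn_shift]
      have hinner : fnn AA (fun k => if k ≤ blkEnd L Lbar M i then bh k
          else bl (k - blkEnd L Lbar M i)) (blkEnd L Lbar M i) x
          = fnn Wbar bbar i x := by
        rw [fnn_congr_bias _ _ bh _ (fun k _ hk2 => if_pos hk2)]
        exact hbh x hx
      rw [hinner]
      have houter : fnn (fun k => AA (blkEnd L Lbar M i + k))
          (fun k => if blkEnd L Lbar M i + k ≤ blkEnd L Lbar M i then bh (blkEnd L Lbar M i + k)
            else bl (blkEnd L Lbar M i + k - blkEnd L Lbar M i))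
          (blkLen L Lbar M (i+1)) (fnn Wbar bbar i x)
          = fnn (fun k => AA (blkEnd L Lbar M i + k)) bl
            (blkLen L Lbar M (i+1)) (fnn Wbar bbar i x) :=
        fnn_congr_bias _ _ _ _ (fun k hk1 _ => by
          rw [if_neg (by omega), Nat.add_sub_cancel_left]) _
      rw [houter, hbl _ ⟨x, hx, rfl⟩, hSm (i+1) (by omega) hi1]
      rfl
  -- conclusion
  obtain ⟨bh, hbh⟩ := hmain Lbar le_rfl
  have hend : blkEnd L Lbar M Lbar = L := if_pos rfl
  rw [hend] at hbh
  refine ⟨fun l => AA l - W l, bh, hrank, fun x hx => ?_⟩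
  have hw : (fun l => W l + (AA l - W l)) = AA := by
    funext l
    abel
  show fnn (fun l => W l + (AA l - W l)) bh L x = fnn Wbar bbar Lbar x
  rw [hw]
  exact hbh x hx

end
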